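/- arXiv:2111.13026 — 8 statements merged into one kernel-verified Lean document; each statement's English description precedes it below -/
import Mathlib

section
/- Let K ≥ 1 and T ≥ 1 be integers. For each j ∈ {1,…,K} let f_j : ℕ → [0,1] be nondecreasing and let F_j(n) = Σ_{s=1}^n f_j(s) be the cumulative fidelity reward. Let μ_1,…,μ_K ∈ [0,1]. Then for every vector of counts N_1,…,N_K ∈ ℕ with Σ_{j=1}^K N_j = T, one has Σ_{j=1}^K (N_j·μ_j + F_j(N_j)) ≤ T · max_{1≤j≤K} (μ_j + F_j(T)/T). In particular, in the stochastic loyalty-points model with increasing fidelity rewards, a single-arm strategy maximizes the pseudo cumulative reward over all sequences of arm pulls. -/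
/-- Cumulative fidelity reward `F(n) = ∑_{s=1}^n f(s)`. -/
noncomputable def cumF (f : ℕ → ℝ) (n : ℕ) : ℝ := ∑ s ∈ Finset.Icc 1 n, f s

lemma cumF_key (f : ℕ → ℝ) (hmono : Monotone f) (n T : ℕ) (h : n ≤ T) :
    (T : ℝ) * cumF f n ≤ (n : ℝ) * cumF f T := by
  have hIoc : ∀ m : ℕ, cumF f m = ∑ s ∈ Finset.Ioc 0 m, f s := by
    intro m; unfold cumF; rw [← Finset.Icc_add_one_left_eq_Ioc]; rfl
  have hsplit : cumF f T = cumF f n + ∑ s ∈ Finset.Ioc n T, f s := by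
    rw [hIoc, hIoc, Finset.sum_Ioc_consecutive _ (Nat.zero_le n) h]
  have h1 : cumF f n ≤ (n : ℝ) * f n := by
    rw [hIoc]
    calc ∑ s ∈ Finset.Ioc 0 n, f s ≤ (Finset.Ioc 0 n).card • f n := by
          apply Finset.sum_le_card_nsmul
          intro x hx
          exact hmono (Finset.mem_Ioc.mp hx).2
      _ = (n : ℝ) * f n := by
          simp [Nat.card_Ioc, nsmul_eq_mul]
  have h2 : ((T : ℝ) - n) * f n ≤ ∑ s ∈ Finset.Ioc n T, f s := by
    have := Finset.card_nsmul_le_sum (Finset.Ioc n T) f (f n)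
      (fun x hx => hmono (le_of_lt (Finset.mem_Ioc.mp hx).1))
    rw [Nat.card_Ioc, nsmul_eq_mul] at this
    rwa [Nat.cast_sub h] at this
  have hFn0 : 0 ≤ (T : ℝ) - n := by
    have := (Nat.cast_le (α := ℝ)).mpr h; linarith
  nlinarith [mul_le_mul_of_nonneg_left h1 hFn0,
    mul_le_mul_of_nonneg_left h2 (Nat.cast_nonneg (α := ℝ) n)]

/-- In the stochastic loyalty-points model with nondecreasing fidelity rewards,
the pseudo cumulative reward of any type `(N_1,…,N_K)` with `∑ N_j = T` is at most
`T · max_j (μ_j + F_j(T)/T)`, the reward of the best single-arm strategy. -/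
theorem stmt0 (K T : ℕ) (hK : 0 < K) (hT : 0 < T)
    (f : Fin K → ℕ → ℝ)
    (hf0 : ∀ j n, 0 ≤ f j n) (hf1 : ∀ j n, f j n ≤ 1)
    (hfmono : ∀ j, Monotone (f j))
    (μ : Fin K → ℝ) (hμ0 : ∀ j, 0 ≤ μ j) (hμ1 : ∀ j, μ j ≤ 1)
    (N : Fin K → ℕ) (hN : ∑ j, N j = T) :
    ∑ j, ((N j : ℝ) * μ j + cumF (f j) (N j))
      ≤ (T : ℝ) *
        Finset.univ.sup' ⟨⟨0, hK⟩, Finset.mem_univ _⟩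
          (fun j => μ j + cumF (f j) T / T) := by
  set M := Finset.univ.sup' ⟨⟨0, hK⟩, Finset.mem_univ _⟩
    (fun j => μ j + cumF (f j) T / T) with hM
  have hTpos : (0 : ℝ) < T := by exact_mod_cast hT
  have hNle : ∀ j, N j ≤ T := by
    intro j
    rw [← hN]
    exact Finset.single_le_sum (fun i _ => Nat.zero_le _) (Finset.mem_univ j)
  have hstep : ∀ j, (N j : ℝ) * μ j + cumF (f j) (N j) ≤ (N j : ℝ) * M := by
    intro j
    have hkey := cumF_key (f j) (hfmono j) (N j) T (hNle j)
    have hF : cumF (f j) (N j) ≤ (N j : ℝ) * (cumF (f j) T / T) := by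
      rw [mul_div_assoc', le_div_iff₀ hTpos]
      nlinarith [hkey]
    have hMle : μ j + cumF (f j) T / T ≤ M := by
      rw [hM]
      exact Finset.le_sup' (fun j => μ j + cumF (f j) T / T) (Finset.mem_univ j)
    calc (N j : ℝ) * μ j + cumF (f j) (N j)
        ≤ (N j : ℝ) * μ j + (N j : ℝ) * (cumF (f j) T / T) := by linarith
      _ = (N j : ℝ) * (μ j + cumF (f j) T / T) := by ring
      _ ≤ (N j : ℝ) * M :=
          mul_le_mul_of_nonneg_left hMle (Nat.cast_nonneg _)
  calc ∑ j, ((N j : ℝ) * μ j + cumF (f j) (N j))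
      ≤ ∑ j, (N j : ℝ) * M := Finset.sum_le_sum fun j _ => hstep j
    _ = (∑ j, (N j : ℝ)) * M := by rw [Finset.sum_mul]
    _ = (T : ℝ) * M := by
        rw [← Nat.cast_sum, hN]
end

section
/- Let K ≥ 1 and T ≥ 1 be integers. For each j ∈ {1,…,K} let f_j : ℕ → [0,1] be nondecreasing, let F_j(n) = Σ_{s=1}^n f_j(s), and let μ_1,…,μ_K ∈ [0,1]. Fix any j* ∈ {1,…,K}. Then for every vector of counts N_1,…,N_K ∈ ℕ with Σ_{j=1}^K N_j = T, one has T·μ_{j*} + F_{j*}(T) − Σ_{j=1}^K (N_j·μ_j + F_j(N_j)) ≤ Σ_{j ≠ j*} N_j·(μ_{j*} − μ_j + f_{j*}(T) − f_j(0)). -/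
lemma cumF_lower (f : ℕ → ℝ) (hmono : Monotone f) (n : ℕ) :
    (n : ℝ) * f 0 ≤ cumF f n := by
  have : ∑ s ∈ Finset.Icc 1 n, f 0 ≤ ∑ s ∈ Finset.Icc 1 n, f s :=
    Finset.sum_le_sum fun s _ => hmono (Nat.zero_le s)
  simpa [cumF, Nat.card_Icc] using this

lemma cumF_upper (f : ℕ → ℝ) (hmono : Monotone f) {n T : ℕ} (h : n ≤ T) :
    cumF f T - cumF f n ≤ ((T : ℝ) - n) * f T := by
  have hsub : Finset.Icc 1 n ⊆ Finset.Icc 1 T := Finset.Icc_subset_Icc_right h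
  have hdiff : Finset.Icc 1 T \ Finset.Icc 1 n = Finset.Icc (n + 1) T := by
    ext s
    simp only [Finset.mem_sdiff, Finset.mem_Icc]
    omega
  have : cumF f T - cumF f n = ∑ s ∈ Finset.Icc (n + 1) T, f s := by
    rw [cumF, cumF, ← hdiff, Finset.sum_sdiff_eq_sub hsub]
  rw [this]
  have hle : ∑ s ∈ Finset.Icc (n + 1) T, f s ≤ ∑ s ∈ Finset.Icc (n + 1) T, f T :=
    Finset.sum_le_sum fun s hs => hmono (Finset.mem_Icc.mp hs).2
  calc ∑ s ∈ Finset.Icc (n + 1) T, f s ≤ ∑ s ∈ Finset.Icc (n + 1) T, f T := hle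
    _ = ((T : ℝ) - n) * f T := by
        rw [Finset.sum_const, Nat.card_Icc]
        have : (T + 1 - (n + 1)) = T - n := by omega
        rw [this, nsmul_eq_mul, Nat.cast_sub h]

/-- Regret decomposition for the loyalty-points model with nondecreasing fidelity rewards:
the pseudo-regret of a type `(N_1,…,N_K)` against the single-arm strategy on `j*` is
at most `∑_{j ≠ j*} N_j (μ_{j*} − μ_j + f_{j*}(T) − f_j(0))`. -/
theorem stmt2 (K T : ℕ) (hK : 0 < K) (hT : 0 < T)
    (f : Fin K → ℕ → ℝ)
    (hf0 : ∀ j n, 0 ≤ f j n) (hf1 : ∀ j n, f j n ≤ 1)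
    (hfmono : ∀ j, Monotone (f j))
    (μ : Fin K → ℝ) (hμ0 : ∀ j, 0 ≤ μ j) (hμ1 : ∀ j, μ j ≤ 1)
    (jstar : Fin K)
    (N : Fin K → ℕ) (hN : ∑ j, N j = T) :
    (T : ℝ) * μ jstar + cumF (f jstar) T
        - ∑ j, ((N j : ℝ) * μ j + cumF (f j) (N j))
      ≤ ∑ j ∈ Finset.univ.erase jstar,
          (N j : ℝ) * (μ jstar - μ j + f jstar T - f j 0) := by
  classical
  have hNle : N jstar ≤ T := by
    rw [← hN]
    exact Finset.single_le_sum (fun i _ => Nat.zero_le _) (Finset.mem_univ jstar)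
  have hTsplit : (T : ℝ) = (N jstar : ℝ) + ∑ j ∈ Finset.univ.erase jstar, (N j : ℝ) := by
    rw [← hN, ← Finset.add_sum_erase _ N (Finset.mem_univ jstar)]; push_cast; ring
  have hsumN : ((T : ℝ) - N jstar) = ∑ j ∈ Finset.univ.erase jstar, (N j : ℝ) := by
    rw [hTsplit]; ring
  -- split the big sums over univ into jstar term + erase
  have hsplit1 : ∑ j, ((N j : ℝ) * μ j + cumF (f j) (N j))
      = ((N jstar : ℝ) * μ jstar + cumF (f jstar) (N jstar))
        + ∑ j ∈ Finset.univ.erase jstar, ((N j : ℝ) * μ j + cumF (f j) (N j)) :=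
    (Finset.add_sum_erase _ _ (Finset.mem_univ jstar)).symm
  have hA : cumF (f jstar) T - cumF (f jstar) (N jstar)
      ≤ (∑ j ∈ Finset.univ.erase jstar, (N j : ℝ)) * f jstar T := by
    rw [← hsumN]
    exact cumF_upper _ (hfmono jstar) hNle
  have hB : ∀ j ∈ Finset.univ.erase jstar, (N j : ℝ) * f j 0 ≤ cumF (f j) (N j) :=
    fun j _ => cumF_lower _ (hfmono j) _
  have hBsum : ∑ j ∈ Finset.univ.erase jstar, (N j : ℝ) * f j 0
      ≤ ∑ j ∈ Finset.univ.erase jstar, cumF (f j) (N j) := Finset.sum_le_sum hB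
  have key : (T : ℝ) * μ jstar + cumF (f jstar) T
        - ∑ j, ((N j : ℝ) * μ j + cumF (f j) (N j))
      = (∑ j ∈ Finset.univ.erase jstar, (N j : ℝ) * (μ jstar - μ j))
        + (cumF (f jstar) T - cumF (f jstar) (N jstar))
        - ∑ j ∈ Finset.univ.erase jstar, cumF (f j) (N j) := by
    rw [hsplit1, hTsplit]
    simp only [mul_sub, Finset.sum_sub_distrib, Finset.sum_add_distrib, ← Finset.sum_mul]
    ring
  rw [key]
  have hRHS : ∑ j ∈ Finset.univ.erase jstar,
        (N j : ℝ) * (μ jstar - μ j + f jstar T - f j 0)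
      = (∑ j ∈ Finset.univ.erase jstar, (N j : ℝ) * (μ jstar - μ j))
        + (∑ j ∈ Finset.univ.erase jstar, (N j : ℝ)) * f jstar T
        - ∑ j ∈ Finset.univ.erase jstar, (N j : ℝ) * f j 0 := by
    simp only [mul_add, mul_sub, Finset.sum_sub_distrib, Finset.sum_add_distrib, ← Finset.sum_mul]
  rw [hRHS]
  linarith
end

section
/- Let T be a positive integer divisible by 8, let f : ℕ → [0,1] be nondecreasing, let F(n) = Σ_{s=1}^n f(s), and set δ = f(7T/8) − f(T/8). Let τ₁ and τ₂ be natural numbers with τ₁ ≤ T/2 and τ₂ ≤ T/2, and set τ = τ₁ + τ₂. Define R_I = T·δ/5 + F(T) − (τ·δ/5 + F(τ) + F(T−τ)) and R_II = T·δ/2 + F(T) − (τ·δ/5 + (T/2 − τ₂)·δ + F(τ) + F(T−τ)). Then max(R_I, R_II) ≥ T·δ/40. -/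
lemma cumF_superadd (f : ℕ → ℝ) (hmono : Monotone f) {a n : ℕ} (h : a ≤ n) :
    cumF f a + cumF f (n - a) ≤ cumF f n := by
  have e : ∀ m, cumF f m = ∑ s ∈ Finset.Ioc 0 m, f s := by
    intro m; unfold cumF; rw [← Finset.Icc_add_one_left_eq_Ioc]; rfl
  rw [e, e, e]
  have split : (∑ s ∈ Finset.Ioc 0 (n - a), f s) + ∑ s ∈ Finset.Ioc (n - a) n, f s
      = ∑ s ∈ Finset.Ioc 0 n, f s :=
    Finset.sum_Ioc_consecutive f (Nat.zero_le _) (Nat.sub_le n a)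
  have hmap : (Finset.Ioc 0 a).map (addLeftEmbedding (n - a)) = Finset.Ioc (n - a) n := by
    rw [Finset.map_add_left_Ioc]
    congr 1 <;> omega
  have hle : (∑ s ∈ Finset.Ioc 0 a, f s) ≤ ∑ s ∈ Finset.Ioc (n - a) n, f s := by
    rw [← hmap, Finset.sum_map]
    exact Finset.sum_le_sum fun i _ => hmono (Nat.le_add_left i (n - a))
  linarith

/-- Deterministic core of the linear lower bound for adversarial loyalty-points bandits
with increasing fidelity rewards: with `δ = f(7T/8) − f(T/8)`, for any `τ₁, τ₂ ≤ T/2`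
the regret in one of the two reward environments is at least `Tδ/40`. -/
theorem stmt5 (T : ℕ) (hT : 0 < T) (h8 : 8 ∣ T)
    (f : ℕ → ℝ) (hf0 : ∀ n, 0 ≤ f n) (hf1 : ∀ n, f n ≤ 1) (hmono : Monotone f)
    (τ₁ τ₂ : ℕ) (h1 : τ₁ ≤ T / 2) (h2 : τ₂ ≤ T / 2) :
    let δ : ℝ := f (7 * T / 8) - f (T / 8)
    let τ : ℕ := τ₁ + τ₂
    let RI : ℝ := (T : ℝ) * δ / 5 + cumF f T
        - ((τ : ℝ) * δ / 5 + cumF f τ + cumF f (T - τ))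
    let RII : ℝ := (T : ℝ) * δ / 2 + cumF f T
        - ((τ : ℝ) * δ / 5 + ((T : ℝ) / 2 - (τ₂ : ℝ)) * δ + cumF f τ + cumF f (T - τ))
    (T : ℝ) * δ / 40 ≤ max RI RII := by
  obtain ⟨k, rfl⟩ := h8
  intro δ τ RI RII
  have hδ : 0 ≤ δ := sub_nonneg.mpr (hmono (by omega))
  have h1' : τ₁ ≤ 4 * k := by omega
  have h2' : τ₂ ≤ 4 * k := by omega
  have hτ : τ ≤ 8 * k := by simp only [τ]; omega
  have hG := cumF_superadd f hmono hτ
  have hRI : RI = (8 * k : ℝ) * δ / 5 + cumF f (8 * k)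
      - ((τ : ℝ) * δ / 5 + cumF f τ + cumF f (8 * k - τ)) := by
    simp only [RI]; push_cast; ring_nf
  have hRII : RII = (8 * k : ℝ) * δ / 2 + cumF f (8 * k)
      - ((τ : ℝ) * δ / 5 + ((8 * k : ℝ) / 2 - (τ₂ : ℝ)) * δ + cumF f τ + cumF f (8 * k - τ)) := by
    simp only [RII]; push_cast; ring_nf
  have hτc : (τ : ℝ) = (τ₁ : ℝ) + (τ₂ : ℝ) := by simp [τ]
  have hT8 : ((8 * k : ℕ) : ℝ) = 8 * (k : ℝ) := by push_cast; ring
  clear_value δ τ RI RII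
  rcases le_or_gt (2 * k) τ₂ with hc | hc
  · -- use RII
    refine le_trans ?_ (le_max_right RI RII)
    rw [hRII, hT8]
    have hb1 : (0 : ℝ) ≤ 8 * (k : ℝ) - (τ : ℝ) := by
      rw [hτc]; push_cast
      have : (τ₁ : ℝ) + τ₂ ≤ 8 * k := by exact_mod_cast (by omega : τ₁ + τ₂ ≤ 8 * k)
      linarith
    have hb2 : (0 : ℝ) ≤ (τ₂ : ℝ) - 2 * k := by
      have : (2 * k : ℝ) ≤ τ₂ := by exact_mod_cast hc
      linarith
    nlinarith [mul_nonneg hb1 hδ, mul_nonneg hb2 hδ, hG]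
  · -- use RI
    refine le_trans ?_ (le_max_left RI RII)
    rw [hRI, hT8]
    have hb1 : (0 : ℝ) ≤ 6 * (k : ℝ) - (τ : ℝ) := by
      rw [hτc]
      have : (τ₁ : ℝ) + τ₂ ≤ 6 * k := by exact_mod_cast (by omega : τ₁ + τ₂ ≤ 6 * k)
      linarith
    nlinarith [mul_nonneg hb1 hδ, hG]
end

section
/- Let K ≥ 1 and M ≥ 1. Let p ∈ ℝ^M with p_i ≥ 0 and Σ_{i=1}^M p_i = 1, and for each i ∈ {1,…,M} let q^{(i)} ∈ ℝ^K with q^{(i)}_j ≥ 0 and Σ_{j=1}^K q^{(i)}_j = 1. Set q_j = Σ_{i=1}^M p_i q^{(i)}_j and assume q_j > 0 for all j. Let c_1,…,c_K ∈ [0,1] and h_1,…,h_M ∈ [0,1]. Then Σ_{j=1}^K q_j · Σ_{i=1}^M p_i · (q^{(i)}_j · c_j / q_j − h_i)² ≤ 2(K+1). -/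
/-- Second-moment bound for the importance-weighted loss estimates in the EXP4-type
algorithm: `∑_j q_j ∑_i p_i (q^{(i)}_j c_j / q_j − h_i)² ≤ 2(K+1)`. -/
theorem stmt10 (K M : ℕ) (hK : 0 < K) (hM : 0 < M)
    (p : Fin M → ℝ) (hp0 : ∀ i, 0 ≤ p i) (hp1 : ∑ i, p i = 1)
    (q' : Fin M → Fin K → ℝ)
    (hq'0 : ∀ i j, 0 ≤ q' i j) (hq'1 : ∀ i, ∑ j, q' i j = 1)
    (c : Fin K → ℝ) (hc : ∀ j, c j ∈ Set.Icc (0 : ℝ) 1)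
    (h : Fin M → ℝ) (hh : ∀ i, h i ∈ Set.Icc (0 : ℝ) 1)
    (q : Fin K → ℝ) (hq : ∀ j, q j = ∑ i, p i * q' i j) (hqpos : ∀ j, 0 < q j) :
    ∑ j, q j * ∑ i, p i * (q' i j * c j / q j - h i) ^ 2 ≤ 2 * (K + 1) := by
  have hq1 : ∑ j, q j = 1 := by
    simp only [hq]
    rw [Finset.sum_comm]
    simp [← Finset.mul_sum, hq'1, hp1]
  have hq'le1 : ∀ i j, q' i j ≤ 1 := by
    intro i j
    calc q' i j ≤ ∑ j', q' i j' :=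
          Finset.single_le_sum (fun j' _ => hq'0 i j') (Finset.mem_univ j)
      _ = 1 := hq'1 i
  have hj : ∀ j : Fin K, q j * ∑ i, p i * (q' i j * c j / q j - h i) ^ 2 ≤ 2 + 2 * q j := by
    intro j
    have hQ := hqpos j
    -- step 1: bound the inner sum
    have step1 : ∑ i, p i * (q' i j * c j / q j - h i) ^ 2
        ≤ ∑ i, p i * (2 * (q' i j * c j / q j) ^ 2 + 2) := by
      apply Finset.sum_le_sum
      intro i _
      apply mul_le_mul_of_nonneg_left _ (hp0 i)
      have hhi := hh i
      nlinarith [sq_nonneg (q' i j * c j / q j + h i), hhi.1, hhi.2]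
    have step2 : ∑ i, p i * (2 * (q' i j * c j / q j) ^ 2 + 2)
        = 2 * (∑ i, p i * (q' i j * c j / q j) ^ 2) + 2 := by
      calc ∑ i, p i * (2 * (q' i j * c j / q j) ^ 2 + 2)
          = ∑ i, (2 * (p i * (q' i j * c j / q j) ^ 2) + 2 * p i) := by
            apply Finset.sum_congr rfl; intros; ring
        _ = 2 * (∑ i, p i * (q' i j * c j / q j) ^ 2) + 2 * ∑ i, p i := by
            rw [Finset.sum_add_distrib, ← Finset.mul_sum, ← Finset.mul_sum]
        _ = 2 * (∑ i, p i * (q' i j * c j / q j) ^ 2) + 2 := by rw [hp1]; ring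
    have step3 : q j * (∑ i, p i * (q' i j * c j / q j) ^ 2) ≤ 1 := by
      have : ∀ i : Fin M, q j * (p i * (q' i j * c j / q j) ^ 2) ≤ p i * q' i j / q j := by
        intro i
        have key : (q' i j * c j) ^ 2 ≤ q' i j := by
          have hcj := hc j
          have h1 : q' i j * c j ≤ q' i j := mul_le_of_le_one_right (hq'0 i j) hcj.2
          have h2 : 0 ≤ q' i j * c j := mul_nonneg (hq'0 i j) hcj.1
          nlinarith [pow_le_pow_left₀ h2 h1 2, hq'le1 i j, hq'0 i j]
        have : q j * (p i * (q' i j * c j / q j) ^ 2) = p i * (q' i j * c j) ^ 2 / q j := by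
          field_simp
        rw [this]
        gcongr
        exact hp0 i
      calc q j * (∑ i, p i * (q' i j * c j / q j) ^ 2)
          = ∑ i, q j * (p i * (q' i j * c j / q j) ^ 2) := Finset.mul_sum _ _ _
        _ ≤ ∑ i, p i * q' i j / q j := Finset.sum_le_sum fun i _ => this i
        _ = (∑ i, p i * q' i j) / q j := by rw [Finset.sum_div]
        _ = 1 := by rw [← hq j]; field_simp
    calc q j * ∑ i, p i * (q' i j * c j / q j - h i) ^ 2
        ≤ q j * (2 * (∑ i, p i * (q' i j * c j / q j) ^ 2) + 2) := by
          apply mul_le_mul_of_nonneg_left _ hQ.le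
          rw [← step2]; exact step1
      _ = 2 * (q j * (∑ i, p i * (q' i j * c j / q j) ^ 2)) + 2 * q j := by ring
      _ ≤ 2 * 1 + 2 * q j := by linarith
      _ = 2 + 2 * q j := by ring
  calc ∑ j, q j * ∑ i, p i * (q' i j * c j / q j - h i) ^ 2
      ≤ ∑ j : Fin K, (2 + 2 * q j) := Finset.sum_le_sum fun j _ => hj j
    _ = 2 * K + 2 * ∑ j, q j := by
        rw [Finset.sum_add_distrib, ← Finset.mul_sum]
        simp [mul_comm]
    _ = 2 * (K + 1) := by rw [hq1]; ring
end

section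
/- Let K ≥ 1, let μ_1,…,μ_K ∈ [0,1], let r_1,…,r_K ∈ [0,1], let ρ_1,…,ρ_K be positive integers, and define σ(μ, N) = Σ_{j=1}^K (μ_j·N_j + r_j·⌊N_j/ρ_j⌋). Let ρ̄ = lcm(ρ_1,…,ρ_K). If ρ̄ divides T, then max over N ∈ ℕ^K with Σ_j N_j = T of σ(μ, N) equals T · max_{1≤j≤K} (μ_j + r_j/ρ_j), and the maximum is attained by a single-arm type, i.e., a type with N_{j*} = T for some j* and N_j = 0 for j ≠ j*. -/
/-- Total expected reward `σ(μ, N) = ∑_j (μ_j N_j + r_j ⌊N_j/ρ_j⌋)` of a type `N`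
in the loyalty-points model with coupon rewards. -/
noncomputable def sigmaCoupon {K : ℕ} (μ r : Fin K → ℝ) (ρ : Fin K → ℕ)
    (N : Fin K → ℕ) : ℝ :=
  ∑ j, (μ j * (N j : ℝ) + r j * ((N j / ρ j : ℕ) : ℝ))

/-- If the least common multiple `ρ̄` of the period lengths divides `T`, then the maximum
of `σ(μ, ·)` over types of total size `T` equals `T · max_j (μ_j + r_j/ρ_j)` and is
attained by a single-arm type. -/
theorem stmt12 (K : ℕ) (hK : 0 < K)
    (μ r : Fin K → ℝ)
    (hμ : ∀ j, μ j ∈ Set.Icc (0 : ℝ) 1) (hr : ∀ j, r j ∈ Set.Icc (0 : ℝ) 1)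
    (ρ : Fin K → ℕ) (hρ : ∀ j, 0 < ρ j)
    (T : ℕ) (hT : 1 ≤ T) (hdvd : Finset.univ.lcm ρ ∣ T) :
    (∀ N : Fin K → ℕ, ∑ j, N j = T →
        sigmaCoupon μ r ρ N
          ≤ (T : ℝ) * Finset.univ.sup' ⟨⟨0, hK⟩, Finset.mem_univ _⟩
              (fun j => μ j + r j / (ρ j : ℝ)))
    ∧ ∃ jstar : Fin K,
        sigmaCoupon μ r ρ (fun j => if j = jstar then T else 0)
          = (T : ℝ) * Finset.univ.sup' ⟨⟨0, hK⟩, Finset.mem_univ _⟩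
              (fun j => μ j + r j / (ρ j : ℝ)) := by
  set M : ℝ := Finset.univ.sup' ⟨⟨0, hK⟩, Finset.mem_univ _⟩
      (fun j => μ j + r j / (ρ j : ℝ)) with hM
  constructor
  · intro N hN
    have hterm : ∀ j : Fin K,
        μ j * (N j : ℝ) + r j * ((N j / ρ j : ℕ) : ℝ) ≤ (N j : ℝ) * M := by
      intro j
      have hρj : (0 : ℝ) < (ρ j : ℝ) := by exact_mod_cast hρ j
      have h1 : ((N j / ρ j : ℕ) : ℝ) ≤ (N j : ℝ) / (ρ j : ℝ) := Nat.cast_div_le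
      have h2 : r j * ((N j / ρ j : ℕ) : ℝ) ≤ r j * ((N j : ℝ) / (ρ j : ℝ)) :=
        mul_le_mul_of_nonneg_left h1 (hr j).1
      have h3 : μ j + r j / (ρ j : ℝ) ≤ M := by
        rw [hM]; exact Finset.le_sup' (fun j => μ j + r j / (ρ j : ℝ)) (Finset.mem_univ j)
      calc μ j * (N j : ℝ) + r j * ((N j / ρ j : ℕ) : ℝ)
          ≤ μ j * (N j : ℝ) + r j * ((N j : ℝ) / (ρ j : ℝ)) := by linarith
        _ = (N j : ℝ) * (μ j + r j / (ρ j : ℝ)) := by ring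
        _ ≤ (N j : ℝ) * M := by
            exact mul_le_mul_of_nonneg_left h3 (by positivity)
    calc sigmaCoupon μ r ρ N ≤ ∑ j, (N j : ℝ) * M :=
          Finset.sum_le_sum (fun j _ => hterm j)
      _ = (T : ℝ) * M := by
          rw [← Finset.sum_mul]
          congr 1
          rw [← Nat.cast_sum, hN]
  · obtain ⟨j0, _, hj0⟩ := Finset.exists_mem_eq_sup' ⟨⟨0, hK⟩, Finset.mem_univ _⟩
      (fun j => μ j + r j / (ρ j : ℝ))
    refine ⟨j0, ?_⟩
    have hρdvd : ρ j0 ∣ T := (Finset.dvd_lcm (Finset.mem_univ j0)).trans hdvd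
    have hρj : (0 : ℝ) < (ρ j0 : ℝ) := by exact_mod_cast hρ j0
    have hdivcast : ((T / ρ j0 : ℕ) : ℝ) = (T : ℝ) / (ρ j0 : ℝ) := by
      obtain ⟨c, rfl⟩ := hρdvd
      rw [Nat.mul_div_cancel_left c (hρ j0)]
      push_cast
      field_simp
    unfold sigmaCoupon
    rw [Finset.sum_eq_single j0]
    · simp only [if_pos rfl, if_true]
      rw [hdivcast, hM, hj0]
      field_simp
    · intro b _ hb
      simp [hb, Nat.zero_div]
    · intro h; exact absurd (Finset.mem_univ j0) h
end

section
/- Let K ≥ 1, T ≥ 1, let μ_1,…,μ_K ∈ [0,1], let r_1,…,r_K ∈ [0,1], let ρ_1,…,ρ_K be positive integers, and define σ(μ, N) = Σ_{j=1}^K (μ_j·N_j + r_j·⌊N_j/ρ_j⌋). Then the value of the best type exceeds the value of the best single-arm type by at most max_j r_j: max over N ∈ ℕ^K with Σ_j N_j = T of σ(μ, N) ≤ max_{1≤j≤K} (T·μ_j + r_j·⌊T/ρ_j⌋) + max_{1≤j≤K} r_j. -/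
/-- In the loyalty-points model with coupon rewards, the value of the best type of total
size `T` exceeds the value of the best single-arm type by at most `max_j r_j`. -/
theorem stmt13 (K : ℕ) (hK : 0 < K)
    (T : ℕ) (hT : 1 ≤ T)
    (μ r : Fin K → ℝ)
    (hμ : ∀ j, μ j ∈ Set.Icc (0 : ℝ) 1) (hr : ∀ j, r j ∈ Set.Icc (0 : ℝ) 1)
    (ρ : Fin K → ℕ) (hρ : ∀ j, 0 < ρ j) :
    ∀ N : Fin K → ℕ, ∑ j, N j = T →
      sigmaCoupon μ r ρ N
        ≤ Finset.univ.sup' ⟨⟨0, hK⟩, Finset.mem_univ _⟩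
            (fun j => (T : ℝ) * μ j + r j * ((T / ρ j : ℕ) : ℝ))
          + Finset.univ.sup' ⟨⟨0, hK⟩, Finset.mem_univ _⟩ (fun j => r j) := by
  intro N hN
  have hne : (Finset.univ : Finset (Fin K)).Nonempty := ⟨⟨0, hK⟩, Finset.mem_univ _⟩
  set c : Fin K → ℝ := fun j => μ j + r j / (ρ j : ℝ) with hc
  -- step 1: sigma ≤ ∑ N_j * c_j
  have step1 : sigmaCoupon μ r ρ N ≤ ∑ j, (N j : ℝ) * c j := by
    apply Finset.sum_le_sum
    intro j _
    have hρj : (0 : ℝ) < ρ j := by exact_mod_cast hρ j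
    have hfloor : ((N j / ρ j : ℕ) : ℝ) ≤ (N j : ℝ) / (ρ j : ℝ) := by
      rw [le_div_iff₀ hρj]
      exact_mod_cast Nat.div_mul_le_self (N j) (ρ j)
    have h2 := mul_le_mul_of_nonneg_left hfloor (hr j).1
    have h3 : (N j : ℝ) * (r j / (ρ j : ℝ)) = r j * ((N j : ℝ) / (ρ j : ℝ)) := by ring
    simp only [hc]
    nlinarith
  -- step 2: pick maximizer of c
  obtain ⟨j0, _, hj0⟩ := Finset.exists_mem_eq_sup' hne c
  have step2 : ∑ j, (N j : ℝ) * c j ≤ (T : ℝ) * c j0 := by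
    calc ∑ j, (N j : ℝ) * c j ≤ ∑ j, (N j : ℝ) * c j0 := by
          apply Finset.sum_le_sum
          intro j _
          exact mul_le_mul_of_nonneg_left (hj0 ▸ Finset.le_sup' c (Finset.mem_univ j))
            (by positivity)
      _ = (T : ℝ) * c j0 := by
          rw [← Finset.sum_mul]
          congr 1
          exact_mod_cast congrArg (Nat.cast : ℕ → ℝ) hN
  -- step 3: T * c j0 ≤ single-arm value at j0 + r j0
  have hρ0 : (0 : ℝ) < ρ j0 := by exact_mod_cast hρ j0
  have step3 : (T : ℝ) * c j0 ≤ ((T : ℝ) * μ j0 + r j0 * ((T / ρ j0 : ℕ) : ℝ)) + r j0 := by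
    have hdiv : (T : ℝ) / (ρ j0 : ℝ) ≤ ((T / ρ j0 : ℕ) : ℝ) + 1 := by
      rw [div_le_iff₀ hρ0]
      have hnat : T < (T / ρ j0 + 1) * ρ j0 := by
        have := Nat.div_add_mod T (ρ j0)
        have := Nat.mod_lt T (hρ j0)
        nlinarith
      have : (T : ℝ) < (((T / ρ j0 : ℕ) : ℝ) + 1) * (ρ j0 : ℝ) := by exact_mod_cast hnat
      linarith
    have h1 : r j0 * ((T : ℝ) / (ρ j0 : ℝ)) ≤ r j0 * (((T / ρ j0 : ℕ) : ℝ) + 1) :=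
      mul_le_mul_of_nonneg_left hdiv (hr j0).1
    have : (T : ℝ) * (r j0 / (ρ j0 : ℝ)) = r j0 * ((T : ℝ) / (ρ j0 : ℝ)) := by ring
    simp only [hc]
    nlinarith
  -- combine
  refine le_trans step1 (le_trans step2 (le_trans step3 ?_))
  gcongr
  · exact Finset.le_sup' (fun j => (T : ℝ) * μ j + r j * ((T / ρ j : ℕ) : ℝ)) (Finset.mem_univ j0)
  · exact Finset.le_sup' (fun j => r j) (Finset.mem_univ j0)
end

section
/- Let T ≥ 1, m ≥ 1 and 0 ≤ t₀ ≤ T be integers, let μ_i, μ_k ∈ [0,1], let f_i, f_k : ℕ → [0,1], and let F_i(n) = Σ_{s=1}^n f_i(s), F_k(n) = Σ_{s=1}^n f_k(s). Define W_T(μ_i, μ_k, m) = (T − ⌊T/(m+1)⌋)·μ_i + ⌊T/(m+1)⌋·μ_k + ⌊T/(m+1)⌋·(F_i(m) + F_k(1)) + F_i(T − (m+1)·⌊T/(m+1)⌋). Then W_{T−t₀}(μ_i, μ_k, m) ≥ W_T(μ_i, μ_k, m) − 2·t₀. -/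
/-- Expected total reward over horizon `T` of the periodic strategy that repeatedly plays
arm `i` for `m` consecutive steps and then arm `k` once, with mean base rewards
`μi, μk` and cumulative fidelity rewards `Fi, Fk`. -/
noncomputable def Wreward (T m : ℕ) (μi μk : ℝ) (Fi Fk : ℕ → ℝ) : ℝ :=
  ((T : ℝ) - ((T / (m + 1) : ℕ) : ℝ)) * μi + ((T / (m + 1) : ℕ) : ℝ) * μk
    + ((T / (m + 1) : ℕ) : ℝ) * (Fi m + Fk 1)
    + Fi (T - (m + 1) * (T / (m + 1)))

lemma cumF_succ (f : ℕ → ℝ) (n : ℕ) : cumF f (n + 1) = cumF f n + f (n + 1) := by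
  unfold cumF
  rw [Finset.sum_Icc_succ_top (Nat.succ_le_succ (Nat.zero_le n))]

lemma cumF_zero (f : ℕ → ℝ) : cumF f 0 = 0 := by simp [cumF]

lemma step_lemma (n m : ℕ) (μi μk : ℝ)
    (hμi : μi ∈ Set.Icc (0 : ℝ) 1) (hμk : μk ∈ Set.Icc (0 : ℝ) 1)
    (fi fk : ℕ → ℝ)
    (hfi : ∀ n, fi n ∈ Set.Icc (0 : ℝ) 1) (hfk : ∀ n, fk n ∈ Set.Icc (0 : ℝ) 1) :
    Wreward (n + 1) m μi μk (cumF fi) (cumF fk) - 2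
      ≤ Wreward n m μi μk (cumF fi) (cumF fk) := by
  obtain ⟨hμi0, hμi1⟩ := hμi
  obtain ⟨hμk0, hμk1⟩ := hμk
  by_cases h : (m + 1) ∣ (n + 1)
  · have hq : (n + 1) / (m + 1) = n / (m + 1) + 1 := Nat.succ_div_of_dvd h
    have hmul : (m + 1) * ((n + 1) / (m + 1)) = n + 1 := Nat.mul_div_cancel' h
    have hn1 : n + 1 = (m + 1) * (n / (m + 1) + 1) := by rw [← hq]; omega
    have hn1' : n + 1 = (m + 1) * (n / (m + 1)) + (m + 1) := by rw [hn1]; ring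
    unfold Wreward
    rw [hq]
    have hr : (n + 1) - (m + 1) * (n / (m + 1) + 1) = 0 := by
      have h2 : (m + 1) * (n / (m + 1) + 1) = (m + 1) * (n / (m + 1)) + (m + 1) := by ring
      omega
    have hr' : n - (m + 1) * (n / (m + 1)) = m := by omega
    rw [hr, hr', cumF_zero]
    have hfk1 : cumF fk 1 = fk 1 := by simp [cumF]
    have h1 := (hfk 1).2
    have h2 := (hfk 1).1
    have hFim0 : (0 : ℝ) ≤ cumF fi m := Finset.sum_nonneg fun s _ => (hfi s).1
    push_cast
    nlinarith [hFim0]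
  · have hq : (n + 1) / (m + 1) = n / (m + 1) := by
      rw [Nat.succ_div, if_neg h, add_zero]
    have hle : (m + 1) * (n / (m + 1)) ≤ n := Nat.mul_div_le n (m + 1)
    have hlt : (m + 1) * (n / (m + 1)) < n + 1 := by omega
    set r := n - (m + 1) * (n / (m + 1)) with hrdef
    unfold Wreward
    rw [hq]
    have hr : (n + 1) - (m + 1) * (n / (m + 1)) = r + 1 := by omega
    rw [hr, cumF_succ fi r, ← hrdef]
    have h1 := (hfi (r + 1)).2
    have h2 := (hfi (r + 1)).1
    push_cast
    nlinarith

/-- Prefix bound: committing to the periodic strategy only during the last `T − t₀` rounds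
costs at most `2 t₀` in total reward: `W_{T−t₀}(μ_i, μ_k, m) ≥ W_T(μ_i, μ_k, m) − 2 t₀`. -/
theorem stmt16 (T m t₀ : ℕ) (hT : 1 ≤ T) (hm : 1 ≤ m) (ht₀ : t₀ ≤ T)
    (μi μk : ℝ) (hμi : μi ∈ Set.Icc (0 : ℝ) 1) (hμk : μk ∈ Set.Icc (0 : ℝ) 1)
    (fi fk : ℕ → ℝ)
    (hfi : ∀ n, fi n ∈ Set.Icc (0 : ℝ) 1) (hfk : ∀ n, fk n ∈ Set.Icc (0 : ℝ) 1) :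
    Wreward T m μi μk (cumF fi) (cumF fk) - 2 * (t₀ : ℝ)
      ≤ Wreward (T - t₀) m μi μk (cumF fi) (cumF fk) := by
  induction t₀ with
  | zero => simp
  | succ t ih =>
    have ht : t ≤ T := by omega
    have h1 := ih ht
    obtain ⟨n, hn⟩ : ∃ n, T - t = n + 1 := ⟨T - t - 1, by omega⟩
    have hstep := step_lemma n m μi μk hμi hμk fi fk hfi hfk
    have hTn : T - (t + 1) = n := by omega
    rw [hn] at h1
    rw [hTn]
    push_cast
    linarith
end

section
/- Let K ≥ 1 and T ≥ 1. For each j ∈ {1,…,K} let f_j : ℕ → [0,1] be nondecreasing with f_j(0) = 0, let F_j(n) = Σ_{s=1}^n f_j(s), and let μ_j ∈ [0,1]. Suppose for each arm j we are given positive integers l_{j,1},…,l_{j,r_j} (the run lengths of arm j; possibly r_j = 0), and set N_j = Σ_{i=1}^{r_j} l_{j,i}, with Σ_{j=1}^K N_j = T. Then Σ_{j=1}^K ( μ_j·N_j + Σ_{i=1}^{r_j} Σ_{q=0}^{l_{j,i} − 1} f_j(q) ) ≤ T · max_{1≤j≤K} (μ_j + F_j(T)/T). In particular, in the stochastic subscription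 model with increasing fidelity rewards, a single-arm strategy maximizes the expected total reward. -/
/-- Prefix averages of a monotone sequence are nondecreasing. -/
lemma avg_mono_aux (f : ℕ → ℝ) (hm : Monotone f) (l T : ℕ) (hlT : l ≤ T) :
    (T : ℝ) * ∑ q ∈ Finset.range l, f q ≤ (l : ℝ) * ∑ q ∈ Finset.range T, f q := by
  have hsplit : ∑ q ∈ Finset.range T, f q
      = ∑ q ∈ Finset.range l, f q + ∑ q ∈ Finset.Ico l T, f q := by
    rw [Finset.range_eq_Ico, ← Finset.sum_Ico_consecutive _ (Nat.zero_le l) hlT, Finset.range_eq_Ico]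
  have h1 : ∑ q ∈ Finset.range l, f q ≤ (l : ℝ) * f l := by
    calc ∑ q ∈ Finset.range l, f q ≤ ∑ _q ∈ Finset.range l, f l :=
          Finset.sum_le_sum fun q hq => hm (le_of_lt (Finset.mem_range.mp hq))
      _ = (l : ℝ) * f l := by simp [mul_comm]
  have h2 : ((T - l : ℕ) : ℝ) * f l ≤ ∑ q ∈ Finset.Ico l T, f q := by
    calc ((T - l : ℕ) : ℝ) * f l = ∑ _q ∈ Finset.Ico l T, f l := by
          simp [Nat.card_Ico, mul_comm]
      _ ≤ ∑ q ∈ Finset.Ico l T, f q :=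
          Finset.sum_le_sum fun q hq => hm (Finset.mem_Ico.mp hq).1
  have hTl : (T : ℝ) = (l : ℝ) + ((T - l : ℕ) : ℝ) := by
    push_cast [Nat.sub_add_cancel hlT]; ring_nf
    rw [Nat.cast_sub hlT]; ring
  rw [hsplit, hTl]
  have : ((T - l : ℕ) : ℝ) * ∑ q ∈ Finset.range l, f q
      ≤ (l : ℝ) * ∑ q ∈ Finset.Ico l T, f q := by
    calc ((T - l : ℕ) : ℝ) * ∑ q ∈ Finset.range l, f q
        ≤ ((T - l : ℕ) : ℝ) * ((l : ℝ) * f l) :=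
          mul_le_mul_of_nonneg_left h1 (by positivity)
      _ = (l : ℝ) * (((T - l : ℕ) : ℝ) * f l) := by ring
      _ ≤ (l : ℝ) * ∑ q ∈ Finset.Ico l T, f q :=
          mul_le_mul_of_nonneg_left h2 (by positivity)
  nlinarith [this]

/-- In the stochastic subscription model with nondecreasing fidelity rewards
(`f_j(0) = 0`), the expected total reward of any strategy, decomposed into runs of
lengths `l_{j,1},…,l_{j,r_j}` for each arm `j` with `N_j = ∑_i l_{j,i}` and
`∑_j N_j = T`, is at most `T · max_j (μ_j + F_j(T)/T)`, the expected total reward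
of the best single-arm strategy. -/
theorem stmt18 (K T : ℕ) (hK : 0 < K) (hT : 0 < T)
    (f : Fin K → ℕ → ℝ)
    (hf0 : ∀ j n, 0 ≤ f j n) (hf1 : ∀ j n, f j n ≤ 1)
    (hfmono : ∀ j, Monotone (f j)) (hfz : ∀ j, f j 0 = 0)
    (μ : Fin K → ℝ) (hμ : ∀ j, μ j ∈ Set.Icc (0 : ℝ) 1)
    (r : Fin K → ℕ) (l : (j : Fin K) → Fin (r j) → ℕ)
    (hl : ∀ j i, 0 < l j i)
    (N : Fin K → ℕ) (hNdef : ∀ j, N j = ∑ i, l j i) (hN : ∑ j, N j = T) :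
    ∑ j, (μ j * (N j : ℝ) + ∑ i, ∑ q ∈ Finset.range (l j i), f j q)
      ≤ (T : ℝ) *
        Finset.univ.sup' ⟨⟨0, hK⟩, Finset.mem_univ _⟩
          (fun j => μ j + cumF (f j) T / T) := by
  set M := Finset.univ.sup' ⟨⟨0, hK⟩, Finset.mem_univ _⟩
      (fun j => μ j + cumF (f j) T / T) with hM
  have hTpos : (0 : ℝ) < (T : ℝ) := by exact_mod_cast hT
  -- ∑_{q<T} f j q ≤ cumF (f j) T
  have hrange_le_cum : ∀ j, ∑ q ∈ Finset.range T, f j q ≤ cumF (f j) T := by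
    intro j
    have : ∑ q ∈ Finset.range T, f j q ≤ ∑ q ∈ Finset.range T, f j (q + 1) :=
      Finset.sum_le_sum fun q _ => hfmono j (Nat.le_succ q)
    calc ∑ q ∈ Finset.range T, f j q ≤ ∑ q ∈ Finset.range T, f j (q + 1) := this
      _ = cumF (f j) T := by
          unfold cumF
          rw [← Finset.Ico_add_one_right_eq_Icc, Finset.sum_Ico_eq_sum_range]
          simp [Nat.add_comm]
  have hNleT : ∀ j, N j ≤ T := by
    intro j
    rw [← hN]
    exact Finset.single_le_sum (fun j _ => Nat.zero_le _) (Finset.mem_univ j)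
  -- per-arm bound
  have harm : ∀ j, μ j * (N j : ℝ) + ∑ i, ∑ q ∈ Finset.range (l j i), f j q
      ≤ (N j : ℝ) * M := by
    intro j
    have hjM : μ j + cumF (f j) T / T ≤ M := by
      rw [hM]
      exact Finset.le_sup' (fun j => μ j + cumF (f j) T / T) (Finset.mem_univ j)
    have hrun : ∀ i, ∑ q ∈ Finset.range (l j i), f j q
        ≤ (l j i : ℝ) * (cumF (f j) T / T) := by
      intro i
      have hli : l j i ≤ T := by
        calc l j i ≤ ∑ i', l j i' :=
              Finset.single_le_sum (fun i' _ => Nat.zero_le _) (Finset.mem_univ i)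
          _ = N j := (hNdef j).symm
          _ ≤ T := hNleT j
      have h := avg_mono_aux (f j) (hfmono j) (l j i) T hli
      have h2 : (T : ℝ) * ∑ q ∈ Finset.range (l j i), f j q
          ≤ (l j i : ℝ) * cumF (f j) T :=
        h.trans (mul_le_mul_of_nonneg_left (hrange_le_cum j) (by positivity))
      rw [← mul_div_assoc, le_div_iff₀ hTpos]
      nlinarith [h2]
    have hsum : ∑ i, ∑ q ∈ Finset.range (l j i), f j q
        ≤ (N j : ℝ) * (cumF (f j) T / T) := by
      calc ∑ i, ∑ q ∈ Finset.range (l j i), f j q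
          ≤ ∑ i, (l j i : ℝ) * (cumF (f j) T / T) :=
            Finset.sum_le_sum fun i _ => hrun i
        _ = (N j : ℝ) * (cumF (f j) T / T) := by
            rw [← Finset.sum_mul, hNdef j]; push_cast; ring
    calc μ j * (N j : ℝ) + ∑ i, ∑ q ∈ Finset.range (l j i), f j q
        ≤ μ j * (N j : ℝ) + (N j : ℝ) * (cumF (f j) T / T) := by linarith
      _ = (N j : ℝ) * (μ j + cumF (f j) T / T) := by ring
      _ ≤ (N j : ℝ) * M :=
          mul_le_mul_of_nonneg_left hjM (by positivity)
  calc ∑ j, (μ j * (N j : ℝ) + ∑ i, ∑ q ∈ Finset.range (l j i), f j q)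
      ≤ ∑ j, (N j : ℝ) * M := Finset.sum_le_sum fun j _ => harm j
    _ = (T : ℝ) * M := by rw [← Finset.sum_mul, ← hN]; push_cast; ring
end
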